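/- A small constellation Q is a D-inverse constellation if and only if it is isomorphic (as a constellation closed under D-inverses) to an inverse subconstellation of the constellation I_Q of injective partial functions on the set Q. -/

import Mathlib

open scoped Classical

/-- A constellation: a partial binary operation (encoded via `Option`) together with a
domain operation `D`, satisfying (Const1), (Const2) and (Const3). -/
structure Constellation (Q : Type*) where
  mul : Q → Q → Option Q
  D : Q → Q
  const1 : ∀ x y z w v, mul y z = some w → mul x w = some v →
    ∃ u, mul x y = some u ∧ mul u z = some v
  const2 : ∀ x y z u v, mul x y = some u → mul y z = some v → (mul x v).isSome
  D_mul : ∀ x, mul (D x) x = some x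
  D_ri : ∀ x s t, mul s (D x) = some t → t = s
  D_unique : ∀ x e, (∀ s t, mul s e = some t → t = s) → mul e x = some x → e = D x

namespace Constellation
variable {Q : Type*} (C : Constellation Q)

/-- `e` is a projection, i.e. an element of `D(Q)`. -/
def IsProj (e : Q) : Prop := ∃ s, e = C.D s

/-- `e` is a right identity. -/
def IsRightId (e : Q) : Prop := ∀ s t, C.mul s e = some t → t = s

/-- `e` is an idempotent. -/
def Idem (e : Q) : Prop := C.mul e e = some e

/-- D-regularity: every `a` has some `b` with `a·b = D(a)`. -/
def DRegular : Prop := ∀ a, ∃ b, C.mul a b = some (C.D a)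

/-- Normality: projections `e`, `f` with `e·f` and `f·e` both existing are equal. -/
def Normal : Prop := ∀ e f, C.IsProj e → C.IsProj f →
  (C.mul e f).isSome → (C.mul f e).isSome → e = f

/-- `t` is a D-inverse of `s`. -/
def IsDInv (s t : Q) : Prop := C.mul s t = some (C.D s) ∧ C.mul t s = some (C.D t)

/-- A D-inverse constellation: every element has a unique D-inverse. -/
def DInverse : Prop := ∀ s, ∃! t, C.IsDInv s t

/-- Right cancellativity. -/
def RightCancellative : Prop := ∀ a b c x, C.mul a c = some x → C.mul b c = some x → a = b

end Constellation

/-- Injective partial functions on `X` (the carrier of the constellation `I_X`). -/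
def PInj (X : Type*) := {f : X → Option X // ∀ a b c, f a = some c → f b = some c → a = b}

/-- The product in `I_X`: `s·t` is the composite (first `s`, then `t`), defined exactly
when the image of `s` is contained in the domain of `t`. -/
noncomputable def PInj.mul {X : Type*} (s t : PInj X) : Option (PInj X) :=
  if h : ∀ a y, s.1 a = some y → (t.1 y).isSome
  then some ⟨fun a => (s.1 a).bind t.1, by
    intro a b c hac hbc
    rcases Option.bind_eq_some_iff.mp hac with ⟨y1, hy1, hy1'⟩
    rcases Option.bind_eq_some_iff.mp hbc with ⟨y2, hy2, hy2'⟩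
    have hy : y1 = y2 := t.2 _ _ _ hy1' hy2'
    subst hy
    exact s.2 _ _ _ hy1 hy2⟩
  else none

/-- The domain operation in `I_X`: the identity map restricted to the domain of `s`. -/
noncomputable def PInj.D {X : Type*} (s : PInj X) : PInj X :=
  ⟨fun a => if (s.1 a).isSome then some a else none, by
    intro a b c ha hb
    have h1 : a = c := by
      by_cases h : (s.1 a).isSome <;> simp [h] at ha
      exact ha
    have h2 : b = c := by
      by_cases h : (s.1 b).isSome <;> simp [h] at hb
      exact hb
    exact h1.trans h2.symm⟩

/-- The inverse of an injective partial function, as an injective partial function. -/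
noncomputable def PInj.inv {X : Type*} (s : PInj X) : PInj X :=
  ⟨fun y => if h : ∃ a, s.1 a = some y then some h.choose else none, by
    intro a b c ha hb
    have h1 : s.1 c = some a := by
      by_cases h : ∃ x, s.1 x = some a
      · simp [h] at ha; rw [← ha]; exact h.choose_spec
      · simp [h] at ha
    have h2 : s.1 c = some b := by
      by_cases h : ∃ x, s.1 x = some b
      · simp [h] at hb; rw [← hb]; exact h.choose_spec
      · simp [h] at hb
    rw [h1] at h2; exact Option.some_injective _ h2⟩

/-! ### Auxiliary lemmas about `PInj` -/

lemma PInj.mul_eq_some_apply {X : Type*} {f g u : PInj X} (h : PInj.mul f g = some u)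
    (a : X) : (f.1 a).bind g.1 = u.1 a := by
  unfold PInj.mul at h
  by_cases hc : ∀ a y, f.1 a = some y → (g.1 y).isSome
  · rw [dif_pos hc] at h
    have := congrArg Subtype.val (Option.some.inj h)
    exact congrFun this a
  · rw [dif_neg hc] at h; exact absurd h (by simp)

lemma PInj.mul_eq_some {X : Type*} {f g u : PInj X}
    (hc : ∀ a y, f.1 a = some y → (g.1 y).isSome)
    (hu : ∀ a, (f.1 a).bind g.1 = u.1 a) : PInj.mul f g = some u := by
  unfold PInj.mul
  rw [dif_pos hc]
  congr 1
  exact Subtype.ext (funext hu)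

lemma PInj.mul_isSome_cond {X : Type*} {f g : PInj X} (h : (PInj.mul f g).isSome) :
    ∀ a y, f.1 a = some y → (g.1 y).isSome := by
  unfold PInj.mul at h
  by_cases hc : ∀ a y, f.1 a = some y → (g.1 y).isSome
  · exact hc
  · rw [dif_neg hc] at h; simp at h

lemma PInj.inv_eq_some {X : Type*} (f : PInj X) {y a : X} :
    (PInj.inv f).1 y = some a ↔ f.1 a = some y := by
  show (if h : ∃ b, f.1 b = some y then some h.choose else none) = some a ↔ _
  constructor
  · intro h
    by_cases he : ∃ b, f.1 b = some y
    · rw [dif_pos he] at h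
      rw [← Option.some.inj h]
      exact he.choose_spec
    · rw [dif_neg he] at h; exact absurd h (by simp)
  · intro h
    have he : ∃ b, f.1 b = some y := ⟨a, h⟩
    rw [dif_pos he]
    exact congrArg some (f.2 _ _ _ he.choose_spec h)

lemma PInj.inv_eq_none {X : Type*} (f : PInj X) {y : X}
    (h : ¬ ∃ a, f.1 a = some y) : (PInj.inv f).1 y = none := by
  show (if h : ∃ b, f.1 b = some y then some h.choose else none) = none
  rw [dif_neg h]

lemma PInj.D_apply {X : Type*} (f : PInj X) (a : X) :
    (PInj.D f).1 a = if (f.1 a).isSome then some a else none := rfl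

lemma PInj.mul_inv {X : Type*} (f : PInj X) :
    PInj.mul f (PInj.inv f) = some (PInj.D f) := by
  apply PInj.mul_eq_some
  · intro a y h
    have : (PInj.inv f).1 y = some a := (PInj.inv_eq_some f).mpr h
    rw [this]; rfl
  · intro a
    rcases hfa : f.1 a with _ | y
    · simp [PInj.D_apply, hfa]
    · have : (PInj.inv f).1 y = some a := (PInj.inv_eq_some f).mpr hfa
      simp [PInj.D_apply, hfa, this]

lemma PInj.inv_mul {X : Type*} (f : PInj X) :
    PInj.mul (PInj.inv f) f = some (PInj.D (PInj.inv f)) := by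
  apply PInj.mul_eq_some
  · intro y a h
    have := (PInj.inv_eq_some f).mp h
    rw [this]; rfl
  · intro y
    rcases hy : (PInj.inv f).1 y with _ | a
    · simp [PInj.D_apply, hy]
    · have := (PInj.inv_eq_some f).mp hy
      simp [PInj.D_apply, hy, this]

/-- Uniqueness of D-inverses in `I_X`. -/
lemma PInj.dinv_unique {X : Type*} {f g : PInj X}
    (hfg : PInj.mul f g = some (PInj.D f)) (hgf : PInj.mul g f = some (PInj.D g)) :
    g = PInj.inv f := by
  apply Subtype.ext
  funext y
  by_cases he : ∃ a, f.1 a = some y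
  · obtain ⟨a, ha⟩ := he
    have h1 := PInj.mul_eq_some_apply hfg a
    rw [ha] at h1
    simp only [Option.bind_some, PInj.D_apply, ha] at h1
    simp at h1
    rw [h1, (PInj.inv_eq_some f).mpr ha]
  · rw [PInj.inv_eq_none f he]
    rcases hy : g.1 y with _ | b
    · rfl
    · exfalso
      have h1 := PInj.mul_eq_some_apply hgf y
      rw [hy] at h1
      simp only [Option.bind_some, PInj.D_apply, hy] at h1
      simp at h1
      exact he ⟨b, h1⟩

/-! ### Auxiliary lemmas about constellations -/

namespace Constellation
variable {Q : Type*} {C : Constellation Q}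

/-- If `a·s = y` and `t` is a D-inverse of `s`, then `y·t = a`. -/
lemma shift {a s y t : Q} (hinv : C.IsDInv s t) (ha : C.mul a s = some y) :
    C.mul y t = some a := by
  obtain ⟨h1, _⟩ := hinv
  have h2 : (C.mul a (C.D s)).isSome := C.const2 a s t y (C.D s) ha h1
  obtain ⟨w, hw⟩ := Option.isSome_iff_exists.mp h2
  rw [C.D_ri s a w hw] at hw
  obtain ⟨u, hu1, hu2⟩ := C.const1 a s t (C.D s) a h1 hw
  rw [ha] at hu1
  rw [← Option.some.inj hu1] at hu2
  exact hu2

end Constellation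

/-- A small constellation `Q` is D-inverse iff it is isomorphic (via a strong injective
radiant whose image is closed under inverses) to an inverse subconstellation of the
constellation `I_Q` of injective partial functions on `Q`. -/
theorem dInverse_iff_inverse_subconstellation_of_IQ {Q : Type*} (C : Constellation Q) :
    C.DInverse ↔
    ∃ ρ : Q → PInj Q, Function.Injective ρ ∧
      (∀ s t u, C.mul s t = some u → PInj.mul (ρ s) (ρ t) = some (ρ u)) ∧
      (∀ s, PInj.D (ρ s) = ρ (C.D s)) ∧
      (∀ s t, (PInj.mul (ρ s) (ρ t)).isSome → (C.mul s t).isSome) ∧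
      (∀ s, ∃ t, ρ t = PInj.inv (ρ s)) := by
  constructor
  · -- Forward direction
    intro hinv
    choose i hi hu using hinv
    have shift : ∀ a s y, C.mul a s = some y → C.mul y (i s) = some a :=
      fun a s y ha => Constellation.shift (hi s) ha
    -- i (i s) = s
    have hii : ∀ s, i (i s) = s := by
      intro s
      exact (hu (i s) s ⟨(hi s).2, (hi s).1⟩).symm
    -- The representation
    set ρ : Q → PInj Q := fun s => ⟨fun a => C.mul a s, by
      intro a b c ha hb
      have h1 := shift a s c ha
      have h2 := shift b s c hb
      rw [h1] at h2
      exact Option.some.inj h2⟩ with hρ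
    have hρ_apply : ∀ s a, (ρ s).1 a = C.mul a s := fun s a => rfl
    refine ⟨ρ, ?_, ?_, ?_, ?_, ?_⟩
    · -- injectivity
      intro s t hst
      have h : ∀ a, C.mul a s = C.mul a t := fun a => congrFun (congrArg Subtype.val hst) a
      have hst1 : C.mul (C.D s) t = some s := by rw [← h]; exact C.D_mul s
      have h2 : C.mul s (i t) = some (C.D s) := shift (C.D s) t s hst1
      have h3 : C.mul (i t) s = some (C.D (i t)) := by rw [h]; exact (hi t).2
      have : i t = i s := hu s (i t) ⟨h2, h3⟩
      rw [← hii s, ← this, hii t]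
    · -- morphism property
      intro s t u hst
      apply PInj.mul_eq_some
      · intro a y ha
        rw [hρ_apply] at ha ⊢
        have h2 : (C.mul a u).isSome := C.const2 a s t y u ha hst
        obtain ⟨v, hv⟩ := Option.isSome_iff_exists.mp h2
        obtain ⟨u', hu1, hu2⟩ := C.const1 a s t u v hst hv
        rw [ha] at hu1
        rw [← Option.some.inj hu1] at hu2
        rw [hu2]; rfl
      · intro a
        rcases ha : C.mul a s with _ | y
        · show ((ρ s).1 a).bind (ρ t).1 = (ρ u).1 a
          rw [hρ_apply, ha]
          rcases hau : C.mul a u with _ | v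
          · rw [hρ_apply, hau]; rfl
          · exfalso
            obtain ⟨u', hu1, _⟩ := C.const1 a s t u v hst hau
            rw [ha] at hu1; exact nomatch hu1
        · show ((ρ s).1 a).bind (ρ t).1 = (ρ u).1 a
          rw [hρ_apply, ha]
          have h2 : (C.mul a u).isSome := C.const2 a s t y u ha hst
          obtain ⟨v, hv⟩ := Option.isSome_iff_exists.mp h2
          obtain ⟨u', hu1, hu2⟩ := C.const1 a s t u v hst hv
          rw [ha] at hu1
          rw [← Option.some.inj hu1] at hu2
          rw [hρ_apply u a, hv]
          show (ρ t).1 y = some v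
          rw [hρ_apply]
          exact hu2
    · -- D compatibility
      intro s
      apply Subtype.ext
      funext a
      rw [PInj.D_apply, hρ_apply, hρ_apply]
      by_cases h : (C.mul a s).isSome
      · rw [if_pos h]
        obtain ⟨y, hy⟩ := Option.isSome_iff_exists.mp h
        have h2 : (C.mul a (C.D s)).isSome := C.const2 a s (i s) y (C.D s) hy (hi s).1
        obtain ⟨w, hw⟩ := Option.isSome_iff_exists.mp h2
        rw [hw, C.D_ri s a w hw]
      · rw [if_neg h]
        rcases hw : C.mul a (C.D s) with _ | w
        · rfl
        · exfalso
          rw [C.D_ri s a w hw] at hw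
          exact h (C.const2 a (C.D s) s a s hw (C.D_mul s))
    · -- reflection of existence
      intro s t h
      have := PInj.mul_isSome_cond h (C.D s) s (C.D_mul s)
      exact this
    · -- closure under inverses
      intro s
      refine ⟨i s, Subtype.ext (funext fun y => ?_)⟩
      by_cases he : ∃ a, (ρ s).1 a = some y
      · obtain ⟨a, ha⟩ := he
        rw [hρ_apply] at ha
        rw [hρ_apply, shift a s y ha, ((PInj.inv_eq_some (ρ s)).mpr ha).symm]
      · rw [PInj.inv_eq_none (ρ s) he, hρ_apply]
        rcases hb : C.mul y (i s) with _ | b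
        · rfl
        · exfalso
          have := shift y (i s) b hb
          rw [hii s] at this
          exact he ⟨b, this⟩
  · -- Backward direction
    rintro ⟨ρ, hinj, hmor, hD, hrefl, hclos⟩
    intro s
    obtain ⟨t, ht⟩ := hclos s
    have h1 : PInj.mul (ρ s) (ρ t) = some (ρ (C.D s)) := by
      rw [ht, PInj.mul_inv, hD]
    have h2 : PInj.mul (ρ t) (ρ s) = some (ρ (C.D t)) := by
      rw [ht, PInj.inv_mul, ← ht, hD]
    have hst : C.mul s t = some (C.D s) := by
      have hs : (C.mul s t).isSome := hrefl s t (by rw [h1]; rfl)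
      obtain ⟨u, hu'⟩ := Option.isSome_iff_exists.mp hs
      have := hmor s t u hu'
      rw [h1] at this
      rw [hu', hinj (Option.some.inj this).symm]
    have hts : C.mul t s = some (C.D t) := by
      have hs : (C.mul t s).isSome := hrefl t s (by rw [h2]; rfl)
      obtain ⟨u, hu'⟩ := Option.isSome_iff_exists.mp hs
      have := hmor t s u hu'
      rw [h2] at this
      rw [hu', hinj (Option.some.inj this).symm]
    refine ⟨t, ⟨hst, hts⟩, ?_⟩
    intro y hy
    apply hinj
    rw [ht]
    apply PInj.dinv_unique
    · rw [hmor s y (C.D s) hy.1, hD]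
    · rw [hmor y s (C.D y) hy.2, hD]
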